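/- arXiv:1904.11403 — 3 statements merged into one kernel-verified Lean document; each statement's English description precedes it below -/
import Mathlib

section
/- For any g ∈ L²((0,1)^{n+m}) with positive total variance, and any f ∈ L²((0,1)ⁿ), h ∈ L²((0,1)^{n+m−1}) with g(x,ξ) = G(f(x), h(x_{∼i},ξ)) where G is L-Lipschitz in its first argument uniformly in the second, the total-effect variance of g in x_i is bounded: ∫∫(g(x_i,x_{∼i},ξ) − ∫g(x̃_i,x_{∼i},ξ)dx̃_i)² dx dξ ≤ 2L²(∫f² dx − ∫(∫f dx_i)² dx_{∼i}). -/
open MeasureTheory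

noncomputable section SobolDefs

/-- Uniform probability measure on the open unit cube `(0,1)^n`. -/
def uCube (n : ℕ) : Measure (Fin n → ℝ) :=
  Measure.pi fun _ => volume.restrict (Set.Ioo 0 1)

/-- Mean value of `f`. -/
def mval {α : Type*} [MeasurableSpace α] (μ : Measure α) (f : α → ℝ) : ℝ := ∫ x, f x ∂μ

/-- Integral of the square of `f`. -/
def intSq {α : Type*} [MeasurableSpace α] (μ : Measure α) (f : α → ℝ) : ℝ := ∫ x, (f x) ^ 2 ∂μ

/-- Variance of `f`. -/
def var' {α : Type*} [MeasurableSpace α] (μ : Measure α) (f : α → ℝ) : ℝ := intSq μ f - (mval μ f) ^ 2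

/-- Covariance of `f` and `h`. -/
def cov' {α : Type*} [MeasurableSpace α] (μ : Measure α) (f h : α → ℝ) : ℝ :=
  (∫ x, f x * h x ∂μ) - mval μ f * mval μ h

/-- Conditional mean of `f` obtained by integrating out the coordinate encoded
by the update map `upd` over `(0,1)`. -/
def cMean {α : Type*} [MeasurableSpace α] (upd : α → ℝ → α) (f : α → ℝ) (x : α) : ℝ :=
  ∫ t in Set.Ioo (0 : ℝ) 1, f (upd x t)

/-- Total-effect variance of the coordinate encoded by `upd`. -/
def tVar {α : Type*} [MeasurableSpace α] (μ : Measure α) (upd : α → ℝ → α) (f : α → ℝ) : ℝ :=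
  intSq μ f - ∫ x, (cMean upd f x) ^ 2 ∂μ

/-- Total Sobol sensitivity index of the coordinate encoded by `upd`. -/
def sobolT {α : Type*} [MeasurableSpace α] (μ : Measure α) (upd : α → ℝ → α) (f : α → ℝ) : ℝ :=
  tVar μ upd f / var' μ f

/-- Updating the `i`-th coordinate of a point of the cube. -/
def updC {n : ℕ} (i : Fin n) : (Fin n → ℝ) → ℝ → (Fin n → ℝ) :=
  fun x t => Function.update x i t

/-- Updating the `i`-th coordinate of the first component of a product point. -/
def updF {n : ℕ} {β : Type*} (i : Fin n) : ((Fin n → ℝ) × β) → ℝ → ((Fin n → ℝ) × β) :=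
  fun p t => (Function.update p.1 i t, p.2)

end SobolDefs

section Aux

variable {α : Type*} [MeasurableSpace α] {μ : Measure α}

lemma myIntMul {F H : α → ℝ} (hF : MemLp F 2 μ) (hH : MemLp H 2 μ) :
    Integrable (fun x => F x * H x) μ := by
  refine Integrable.mono' (hF.integrable_sq.add hH.integrable_sq) (hF.1.mul hH.1) ?_
  refine Filter.Eventually.of_forall fun x => ?_
  simp only [Pi.add_apply]
  rw [Real.norm_eq_abs, abs_mul]
  nlinarith [sq_nonneg (|F x| - |H x|), sq_abs (F x), sq_abs (H x), abs_nonneg (F x),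
    abs_nonneg (H x)]

lemma myIntComp {β : Type*} [MeasurableSpace β] {ν : Measure β} {T : α → β}
    (hT : MeasurePreserving T μ ν) {g : β → ℝ} (hg : AEStronglyMeasurable g ν) :
    ∫ x, g (T x) ∂μ = ∫ y, g y ∂ν := by
  rw [← hT.map_eq] at hg
  rw [← hT.map_eq, integral_map hT.measurable.aemeasurable hg]

/-- The key generic computation: for a "resampling" map `u` that is idempotent and
measure preserving, letting `c x = ∫ t, F (u x t)`, one has `∫ F·c = ∫ c²` and
`∫∫ (F x − F (u x t))² = 2(∫F² − ∫c²)`, and `c ∈ L²`. -/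
lemma myKey {β : Type*} [MeasurableSpace β] {ρ : Measure β}
    [IsProbabilityMeasure μ] [IsProbabilityMeasure ρ]
    (u : α → β → α) (hMP : MeasurePreserving (fun z : α × β => u z.1 z.2) (μ.prod ρ) μ)
    (hidem : ∀ x s t, u (u x s) t = u x t)
    {F : α → ℝ} (hF : MemLp F 2 μ) :
    MemLp (fun x => ∫ t, F (u x t) ∂ρ) 2 μ ∧
    (∫ x, F x * (∫ t, F (u x t) ∂ρ) ∂μ = ∫ x, (∫ t, F (u x t) ∂ρ) ^ 2 ∂μ) ∧
    (∫ z, (F z.1 - F (u z.1 z.2)) ^ 2 ∂(μ.prod ρ)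
        = 2 * ((∫ x, F x ^ 2 ∂μ) - ∫ x, (∫ t, F (u x t) ∂ρ) ^ 2 ∂μ)) := by
  set c : α → ℝ := fun x => ∫ t, F (u x t) ∂ρ with hc_def
  have hΦ : MemLp (fun z : α × β => F (u z.1 z.2)) 2 (μ.prod ρ) :=
    hF.comp_measurePreserving hMP
  have hc_meas : AEStronglyMeasurable c μ := hΦ.1.integral_prod_right'
  have hΦsq : Integrable (fun z : α × β => F (u z.1 z.2) ^ 2) (μ.prod ρ) := hΦ.integrable_sq
  have hslice : ∀ᵐ x ∂μ, c x ^ 2 ≤ ∫ t, F (u x t) ^ 2 ∂ρ := by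
    filter_upwards [hΦsq.prod_right_ae, hΦ.1.prodMk_left] with x h1 h2
    have hm : MemLp (fun t => F (u x t)) 2 ρ := (memLp_two_iff_integrable_sq h2).2 h1
    have hv := ProbabilityTheory.variance_nonneg (fun t => F (u x t)) ρ
    rw [ProbabilityTheory.variance_eq_sub hm] at hv
    simp only [Pi.pow_apply] at hv
    linarith
  have hcsq_int : Integrable (fun x => c x ^ 2) μ := by
    refine Integrable.mono' hΦsq.integral_prod_left ?_ ?_
    · exact hc_meas.pow 2
    · filter_upwards [hslice] with x hx
      rw [Real.norm_eq_abs, abs_of_nonneg (sq_nonneg _)]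
      exact hx
  have hc : MemLp c 2 μ := (memLp_two_iff_integrable_sq hc_meas).2 hcsq_int
  have hinv : ∀ x s, c (u x s) = c x := by
    intro x s
    simp only [hc_def, hidem]
  have hFc_int : Integrable (fun x => F x * c x) μ := myIntMul hF hc
  have hcross : ∫ x, F x * c x ∂μ = ∫ x, c x ^ 2 ∂μ := by
    have h1 : ∫ z, F (u z.1 z.2) * c (u z.1 z.2) ∂(μ.prod ρ) = ∫ x, F x * c x ∂μ :=
      myIntComp hMP hFc_int.1
    have h2 : (fun z : α × β => F (u z.1 z.2) * c (u z.1 z.2))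
        = fun z : α × β => F (u z.1 z.2) * c z.1 := by
      funext z; rw [hinv]
    have hint2 : Integrable (fun z : α × β => F (u z.1 z.2) * c z.1) (μ.prod ρ) := by
      rw [← h2]
      exact (hMP.integrable_comp hFc_int.1).2 hFc_int
    have h3 : ∫ z, F (u z.1 z.2) * c z.1 ∂(μ.prod ρ) = ∫ x, c x * c x ∂μ := by
      rw [integral_prod _ hint2]
      refine integral_congr_ae (Filter.Eventually.of_forall fun x => ?_)
      show ∫ y, F (u x y) * c x ∂ρ = c x * c x
      rw [integral_mul_const]
    rw [← h1, h2, h3]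
    simp [pow_two]
  have mpFst : MeasurePreserving (Prod.fst : α × β → α) (μ.prod ρ) μ :=
    ⟨measurable_fst, by simp⟩
  have hΦ1 : MemLp (fun z : α × β => F z.1) 2 (μ.prod ρ) := hF.comp_measurePreserving mpFst
  have e1 : ∫ z, F z.1 ^ 2 ∂(μ.prod ρ) = ∫ x, F x ^ 2 ∂μ :=
    myIntComp mpFst hF.integrable_sq.1
  have e2 : ∫ z, F (u z.1 z.2) ^ 2 ∂(μ.prod ρ) = ∫ x, F x ^ 2 ∂μ :=
    myIntComp hMP hF.integrable_sq.1
  have hmul : Integrable (fun z : α × β => F z.1 * F (u z.1 z.2)) (μ.prod ρ) := myIntMul hΦ1 hΦ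
  have e3 : ∫ z, F z.1 * F (u z.1 z.2) ∂(μ.prod ρ) = ∫ x, c x ^ 2 ∂μ := by
    rw [integral_prod _ hmul, ← hcross]
    refine integral_congr_ae (Filter.Eventually.of_forall fun x => ?_)
    show ∫ y, F x * F (u x y) ∂ρ = F x * c x
    rw [integral_const_mul]
  have hsq : ∫ z, (F z.1 - F (u z.1 z.2)) ^ 2 ∂(μ.prod ρ)
      = 2 * ((∫ x, F x ^ 2 ∂μ) - ∫ x, c x ^ 2 ∂μ) := by
    have expand : ∀ z : α × β, (F z.1 - F (u z.1 z.2)) ^ 2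
        = F z.1 ^ 2 + F (u z.1 z.2) ^ 2 - 2 * (F z.1 * F (u z.1 z.2)) := by
      intro z; ring
    have hadd : Integrable (fun z : α × β => F z.1 ^ 2 + F (u z.1 z.2) ^ 2) (μ.prod ρ) :=
      hΦ1.integrable_sq.add hΦ.integrable_sq
    rw [integral_congr_ae (Filter.Eventually.of_forall expand),
      integral_sub hadd (hmul.const_mul 2),
      integral_add hΦ1.integrable_sq hΦ.integrable_sq, integral_const_mul, e1, e2, e3]
    ring
  exact ⟨hc, hcross, hsq⟩

instance lam01_prob : IsProbabilityMeasure (volume.restrict (Set.Ioo (0:ℝ) 1)) :=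
  ⟨by simp⟩

instance uCube_prob (n : ℕ) : IsProbabilityMeasure (uCube n) := by
  unfold uCube; infer_instance

lemma mp_updC {n : ℕ} (i : Fin n) :
    MeasurePreserving (fun z : (Fin n → ℝ) × ℝ => Function.update z.1 i z.2)
      ((uCube n).prod (volume.restrict (Set.Ioo (0:ℝ) 1))) (uCube n) := by
  set lam : Measure ℝ := volume.restrict (Set.Ioo (0:ℝ) 1) with hlam
  refine ⟨measurable_update', ?_⟩
  unfold uCube
  refine (Measure.pi_eq fun s hs => ?_).symm
  rw [Measure.map_apply measurable_update' (MeasurableSet.univ_pi hs)]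
  have hpre : (fun z : (Fin n → ℝ) × ℝ => Function.update z.1 i z.2) ⁻¹' (Set.pi Set.univ s)
      = (Set.pi Set.univ (Function.update s i Set.univ)) ×ˢ (s i) := by
    ext ⟨x, t⟩
    simp only [Set.mem_preimage, Set.mem_pi, Set.mem_univ, forall_true_left, Set.mem_prod]
    constructor
    · intro hmem
      refine ⟨fun j => ?_, by simpa using hmem i⟩
      rcases eq_or_ne j i with rfl | hj
      · simp
      · have := hmem j
        rw [Function.update_of_ne hj] at this
        rwa [Function.update_of_ne hj]
    · rintro ⟨h1, h2⟩ j
      rcases eq_or_ne j i with rfl | hj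
      · simpa using h2
      · have := h1 j
        rwa [Function.update_of_ne hj] at this ⊢
  rw [hpre, Measure.prod_prod, Measure.pi_pi]
  have hupd : ∀ j, (volume.restrict (Set.Ioo (0:ℝ) 1)) (Function.update s i Set.univ j)
      = Function.update (fun j => (volume.restrict (Set.Ioo (0:ℝ) 1)) (s j)) i 1 j := by
    intro j
    rcases eq_or_ne j i with rfl | hj
    · simp
    · simp [Function.update_of_ne hj]
  calc (∏ j, (volume.restrict (Set.Ioo (0:ℝ) 1)) (Function.update s i Set.univ j)) * lam (s i)
      = (∏ j, Function.update (fun j => (volume.restrict (Set.Ioo (0:ℝ) 1)) (s j)) i 1 j)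
        * lam (s i) := by rw [Finset.prod_congr rfl fun j _ => hupd j]
    _ = (∏ j ∈ Finset.univ.erase i, (volume.restrict (Set.Ioo (0:ℝ) 1)) (s j)) * lam (s i) := by
        rw [Finset.prod_update_of_mem (Finset.mem_univ i), one_mul,
          Finset.sdiff_singleton_eq_erase]
    _ = ∏ j, (volume.restrict (Set.Ioo (0:ℝ) 1)) (s j) := by
        rw [mul_comm, ← Finset.mul_prod_erase Finset.univ _ (Finset.mem_univ i)]

end Aux

/-- Key variance estimate: for `g(x,ξ) = G(f(x), h(x_{∼i},ξ))` with `G`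
`L`-Lipschitz in its first argument uniformly in the second,
`∫∫ (g − ∫g dx̃_i)² ≤ 2L²(∫f² − ∫(∫f dx_i)²)`. -/
theorem stmt13 {n m : ℕ} (i : Fin n) (G : ℝ → ℝ → ℝ) (L : ℝ)
    (hLip : ∀ u u₀ v : ℝ, |G u v - G u₀ v| ≤ L * |u - u₀|)
    (f : (Fin n → ℝ) → ℝ) (h : (Fin n → ℝ) × (Fin m → ℝ) → ℝ)
    (hf : MemLp f 2 (uCube n)) (hh : MemLp h 2 ((uCube n).prod (uCube m)))
    (hind : ∀ (x : Fin n → ℝ) (t : ℝ) (ξ : Fin m → ℝ),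
      h (Function.update x i t, ξ) = h (x, ξ))
    (hg : MemLp (fun p : (Fin n → ℝ) × (Fin m → ℝ) => G (f p.1) (h p)) 2
      ((uCube n).prod (uCube m)))
    (hvg : 0 < var' ((uCube n).prod (uCube m)) fun p => G (f p.1) (h p)) :
    (∫ p, (G (f p.1) (h p) -
        cMean (updF i) (fun q => G (f q.1) (h q)) p) ^ 2 ∂(uCube n).prod (uCube m)) ≤
      2 * L ^ 2 *
        (intSq (uCube n) f - ∫ x, (cMean (updC i) f x) ^ 2 ∂uCube n) := by
  classical
  have mpT : MeasurePreserving
      (fun z : (Fin n → ℝ) × ℝ => (fun x t => Function.update x i t) z.1 z.2)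
      ((uCube n).prod (volume.restrict (Set.Ioo (0:ℝ) 1))) (uCube n) := mp_updC i
  -- measure preservation of the resampling map on the product space
  have mpS : MeasurePreserving
      (fun z : ((Fin n → ℝ) × (Fin m → ℝ)) × ℝ =>
        (fun p t => ((Function.update p.1 i t, p.2) : (Fin n → ℝ) × (Fin m → ℝ))) z.1 z.2)
      (((uCube n).prod (uCube m)).prod (volume.restrict (Set.Ioo (0:ℝ) 1)))
      ((uCube n).prod (uCube m)) := by
    have h1 := measurePreserving_prodAssoc (uCube n) (uCube m)
      (volume.restrict (Set.Ioo (0:ℝ) 1))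
    have h2 := (MeasurePreserving.id (uCube n)).prod
      (Measure.measurePreserving_swap (μ := uCube m)
        (ν := volume.restrict (Set.Ioo (0:ℝ) 1)))
    have h3 := MeasurePreserving.symm _
      (measurePreserving_prodAssoc (uCube n) (volume.restrict (Set.Ioo (0:ℝ) 1)) (uCube m))
    have h4 := mpT.prod (MeasurePreserving.id (uCube m))
    have hcomp := h4.comp (h3.comp (h2.comp h1))
    convert hcomp using 1
    funext ⟨⟨x, y⟩, t⟩
    rfl
  have mpFstPi : MeasurePreserving (Prod.fst : ((Fin n → ℝ) × (Fin m → ℝ)) → (Fin n → ℝ))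
      ((uCube n).prod (uCube m)) (uCube n) := ⟨measurable_fst, by simp⟩
  have mpR : MeasurePreserving
      (fun z : ((Fin n → ℝ) × (Fin m → ℝ)) × ℝ => ((z.1.1, z.2) : (Fin n → ℝ) × ℝ))
      (((uCube n).prod (uCube m)).prod (volume.restrict (Set.Ioo (0:ℝ) 1)))
      ((uCube n).prod (volume.restrict (Set.Ioo (0:ℝ) 1))) :=
    mpFstPi.prod (MeasurePreserving.id _)
  obtain ⟨hcf, fcross, fsq⟩ := myKey (fun x t => Function.update x i t) mpT
    (fun x s t => by simp only [Function.update_idem]) hf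
  obtain ⟨hcg, gcross, gsq⟩ := myKey
    (fun p t => ((Function.update p.1 i t, p.2) : (Fin n → ℝ) × (Fin m → ℝ))) mpS
    (fun p s t => by simp only [Function.update_idem]) hg
  have hcg_eq : (cMean (updF i) fun q => G (f q.1) (h q))
      = fun p : (Fin n → ℝ) × (Fin m → ℝ) =>
        ∫ t, G (f (Function.update p.1 i t)) (h (Function.update p.1 i t, p.2))
          ∂(volume.restrict (Set.Ioo (0:ℝ) 1)) := rfl
  have hcf_eq : cMean (updC i) f = fun x => ∫ t, f (Function.update x i t)
      ∂(volume.restrict (Set.Ioo (0:ℝ) 1)) := rfl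
  -- expansion of the left-hand side
  have hLHS : (∫ p, (G (f p.1) (h p) -
        cMean (updF i) (fun q => G (f q.1) (h q)) p) ^ 2 ∂(uCube n).prod (uCube m))
      = (∫ p, G (f p.1) (h p) ^ 2 ∂(uCube n).prod (uCube m))
        - ∫ p, (cMean (updF i) (fun q => G (f q.1) (h q)) p) ^ 2
            ∂(uCube n).prod (uCube m) := by
    rw [hcg_eq]
    have expand : ∀ p : (Fin n → ℝ) × (Fin m → ℝ), (G (f p.1) (h p) -
        ∫ t, G (f (Function.update p.1 i t)) (h (Function.update p.1 i t, p.2))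
          ∂(volume.restrict (Set.Ioo (0:ℝ) 1))) ^ 2
        = G (f p.1) (h p) ^ 2 + (∫ t, G (f (Function.update p.1 i t))
            (h (Function.update p.1 i t, p.2)) ∂(volume.restrict (Set.Ioo (0:ℝ) 1))) ^ 2
          - 2 * (G (f p.1) (h p) * ∫ t, G (f (Function.update p.1 i t))
            (h (Function.update p.1 i t, p.2)) ∂(volume.restrict (Set.Ioo (0:ℝ) 1))) := by
      intro p; ring
    have hadd : Integrable (fun p : (Fin n → ℝ) × (Fin m → ℝ) => G (f p.1) (h p) ^ 2
        + (∫ t, G (f (Function.update p.1 i t)) (h (Function.update p.1 i t, p.2))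
            ∂(volume.restrict (Set.Ioo (0:ℝ) 1))) ^ 2) ((uCube n).prod (uCube m)) :=
      hg.integrable_sq.add hcg.integrable_sq
    rw [integral_congr_ae (Filter.Eventually.of_forall expand),
      integral_sub hadd ((myIntMul hg hcg).const_mul 2),
      integral_add hg.integrable_sq hcg.integrable_sq, integral_const_mul, gcross]
    ring
  -- pointwise Lipschitz bound
  have hptw : ∀ z : ((Fin n → ℝ) × (Fin m → ℝ)) × ℝ,
      (G (f z.1.1) (h z.1) - G (f (Function.update z.1.1 i z.2))
        (h (Function.update z.1.1 i z.2, z.1.2))) ^ 2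
      ≤ L ^ 2 * (f z.1.1 - f (Function.update z.1.1 i z.2)) ^ 2 := by
    intro z
    have hh' : h (Function.update z.1.1 i z.2, z.1.2) = h z.1 := by
      rw [hind]
    have habs : |G (f z.1.1) (h z.1) - G (f (Function.update z.1.1 i z.2))
        (h (Function.update z.1.1 i z.2, z.1.2))|
        ≤ L * |f z.1.1 - f (Function.update z.1.1 i z.2)| := by
      rw [hh']
      exact hLip _ _ _
    calc (G (f z.1.1) (h z.1) - G (f (Function.update z.1.1 i z.2))
          (h (Function.update z.1.1 i z.2, z.1.2))) ^ 2
        = |G (f z.1.1) (h z.1) - G (f (Function.update z.1.1 i z.2))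
          (h (Function.update z.1.1 i z.2, z.1.2))| ^ 2 := (sq_abs _).symm
      _ ≤ (L * |f z.1.1 - f (Function.update z.1.1 i z.2)|) ^ 2 :=
          pow_le_pow_left₀ (abs_nonneg _) habs 2
      _ = L ^ 2 * (f z.1.1 - f (Function.update z.1.1 i z.2)) ^ 2 := by
          rw [mul_pow, sq_abs]
  -- integrability of the dominating function
  have hf1 : MemLp (fun w : (Fin n → ℝ) × ℝ => f w.1) 2
      ((uCube n).prod (volume.restrict (Set.Ioo (0:ℝ) 1))) :=
    hf.comp_measurePreserving ⟨measurable_fst, by simp⟩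
  have hfT : MemLp (fun w : (Fin n → ℝ) × ℝ => f (Function.update w.1 i w.2)) 2
      ((uCube n).prod (volume.restrict (Set.Ioo (0:ℝ) 1))) :=
    hf.comp_measurePreserving mpT
  have hφ : Integrable (fun w : (Fin n → ℝ) × ℝ =>
      (f w.1 - f (Function.update w.1 i w.2)) ^ 2)
      ((uCube n).prod (volume.restrict (Set.Ioo (0:ℝ) 1))) := (hf1.sub hfT).integrable_sq
  have hφR : Integrable (fun z : ((Fin n → ℝ) × (Fin m → ℝ)) × ℝ =>
      (f z.1.1 - f (Function.update z.1.1 i z.2)) ^ 2)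
      (((uCube n).prod (uCube m)).prod (volume.restrict (Set.Ioo (0:ℝ) 1))) :=
    (mpR.integrable_comp hφ.1).2 hφ
  have hmono : ∫ z, (G (f z.1.1) (h z.1) - G (f (Function.update z.1.1 i z.2))
        (h (Function.update z.1.1 i z.2, z.1.2))) ^ 2
        ∂(((uCube n).prod (uCube m)).prod (volume.restrict (Set.Ioo (0:ℝ) 1)))
      ≤ ∫ z, L ^ 2 * (f z.1.1 - f (Function.update z.1.1 i z.2)) ^ 2
        ∂(((uCube n).prod (uCube m)).prod (volume.restrict (Set.Ioo (0:ℝ) 1))) :=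
    integral_mono_of_nonneg (Filter.Eventually.of_forall fun z => sq_nonneg _)
      (hφR.const_mul _) (Filter.Eventually.of_forall hptw)
  have hval : ∫ z, L ^ 2 * (f z.1.1 - f (Function.update z.1.1 i z.2)) ^ 2
        ∂(((uCube n).prod (uCube m)).prod (volume.restrict (Set.Ioo (0:ℝ) 1)))
      = L ^ 2 * (2 * ((∫ x, f x ^ 2 ∂(uCube n))
          - ∫ x, (∫ t, f (Function.update x i t)
              ∂(volume.restrict (Set.Ioo (0:ℝ) 1))) ^ 2 ∂(uCube n))) := by
    rw [integral_const_mul]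
    congr 1
    rw [← fsq]
    exact myIntComp mpR (g := fun w : (Fin n → ℝ) × ℝ =>
      (f w.1 - f (Function.update w.1 i w.2)) ^ 2) hφ.1
  have fnonneg : 0 ≤ (∫ x, f x ^ 2 ∂(uCube n))
      - ∫ x, (∫ t, f (Function.update x i t)
          ∂(volume.restrict (Set.Ioo (0:ℝ) 1))) ^ 2 ∂(uCube n) := by
    have h0 : 0 ≤ ∫ z, (f z.1 - f (Function.update z.1 i z.2)) ^ 2
        ∂((uCube n).prod (volume.restrict (Set.Ioo (0:ℝ) 1))) :=
      integral_nonneg fun z => sq_nonneg _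
    rw [fsq] at h0
    linarith
  have hmain : (∫ p, (G (f p.1) (h p) -
        cMean (updF i) (fun q => G (f q.1) (h q)) p) ^ 2 ∂(uCube n).prod (uCube m))
      ≤ 2 * L ^ 2 * ((∫ x, f x ^ 2 ∂(uCube n))
          - ∫ x, (∫ t, f (Function.update x i t)
              ∂(volume.restrict (Set.Ioo (0:ℝ) 1))) ^ 2 ∂(uCube n)) := by
    have hch := le_trans hmono (le_of_eq hval)
    rw [gsq] at hch
    rw [hLHS, hcg_eq]
    nlinarith [sq_nonneg L]
  calc (∫ p, (G (f p.1) (h p) -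
        cMean (updF i) (fun q => G (f q.1) (h q)) p) ^ 2 ∂(uCube n).prod (uCube m))
      ≤ 2 * L ^ 2 * ((∫ x, f x ^ 2 ∂(uCube n))
          - ∫ x, (∫ t, f (Function.update x i t)
              ∂(volume.restrict (Set.Ioo (0:ℝ) 1))) ^ 2 ∂(uCube n)) := hmain
    _ = 2 * L ^ 2 * (intSq (uCube n) f - ∫ x, (cMean (updC i) f x) ^ 2 ∂uCube n) := by
        rw [hcf_eq]; rfl
end

section
/- For the function g(x₁,x₂,ξ) = β^{−1/4}·(x₁+x₂+ξ)^{−1/4} on (0,1)³ with β > 0, the total Sobol index S^g_{T,x₂} does not depend on β, and by symmetry S^g_{T,x₁} = S^g_{T,x₂} = S^g_{T,ξ}. Consequently, the single-scale model f(x) = x₁ + βx₂ can have arbitrarily small S^f_{T,x₂} (as β → 0) while S^g_{T,x₂} stays bounded away from 0. -/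
open MeasureTheory

noncomputable section Proof15
namespace Proof15

open Real Set

/-- the base 1-dim measure -/
def nu : Measure ℝ := volume.restrict (Set.Ioo 0 1)

instance : IsProbabilityMeasure nu := ⟨by simp [nu]⟩

instance (n : ℕ) : IsProbabilityMeasure (Measure.pi fun _ : Fin n => nu) :=
  Measure.pi.instIsProbabilityMeasure _

lemma uCube_eq : uCube 3 = Measure.pi fun _ : Fin 3 => nu := rfl

/-- scaling invariance of the total Sobol index -/
lemma cMean_const_mul {α : Type*} [MeasurableSpace α] (upd : α → ℝ → α) (f : α → ℝ) (c : ℝ) (x : α) :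
    cMean upd (fun y => c * f y) x = c * cMean upd f x := by
  simp [cMean, integral_const_mul]

lemma sobolT_const_mul {α : Type*} [MeasurableSpace α] (μ : Measure α) (upd : α → ℝ → α)
    (f : α → ℝ) {c : ℝ} (hc : c ≠ 0) :
    sobolT μ upd (fun y => c * f y) = sobolT μ upd f := by
  have h1 : ∀ x : α, (c * f x) ^ 2 = c ^ 2 * (f x) ^ 2 := fun x => by ring
  have h2 : intSq μ (fun y => c * f y) = c ^ 2 * intSq μ f := by
    simp only [intSq, h1, integral_const_mul]
  have h3 : mval μ (fun y => c * f y) = c * mval μ f := by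
    simp [mval, integral_const_mul]
  have h4 : (∫ x, (cMean upd (fun y => c * f y) x) ^ 2 ∂μ)
      = c ^ 2 * ∫ x, (cMean upd f x) ^ 2 ∂μ := by
    simp only [cMean_const_mul, mul_pow, integral_const_mul]
  have hc2 : (c : ℝ) ^ 2 ≠ 0 := pow_ne_zero _ hc
  simp only [sobolT, tVar, var', h2, h3, h4, mul_pow]
  rw [← mul_sub, ← mul_sub, mul_div_mul_left _ _ hc2]

/-- change of variables under a coordinate permutation -/
lemma integral_perm (σ : Fin 3 ≃ Fin 3) (F : (Fin 3 → ℝ) → ℝ) :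
    ∫ x, F ((MeasurableEquiv.piCongrLeft (fun _ : Fin 3 => ℝ) σ) x) ∂(uCube 3)
      = ∫ x, F x ∂(uCube 3) := by
  rw [uCube_eq]
  exact (measurePreserving_piCongrLeft (fun _ : Fin 3 => nu) σ).integral_comp
    (MeasurableEquiv.piCongrLeft (fun _ : Fin 3 => ℝ) σ).measurableEmbedding F

lemma perm_apply (σ : Fin 3 ≃ Fin 3) (x : Fin 3 → ℝ) (j : Fin 3) :
    (MeasurableEquiv.piCongrLeft (fun _ : Fin 3 => ℝ) σ) x j = x (σ.symm j) := by
  rw [MeasurableEquiv.coe_piCongrLeft]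
  conv_lhs => rw [show j = σ (σ.symm j) by simp]
  exact Equiv.piCongrLeft_apply_apply (fun _ => ℝ) σ x (σ.symm j)


/-- the base integrand -/
def phi : (Fin 3 → ℝ) → ℝ := fun x => (x 0 + x 1 + x 2) ^ (-(1/4) : ℝ)

def fb (β : ℝ) : (Fin 3 → ℝ) → ℝ := fun x => β ^ (-(1/4) : ℝ) * phi x

lemma cm01 (β : ℝ) :
    ∫ x, (cMean (updC 0) (fb β) x) ^ 2 ∂(uCube 3)
      = ∫ x, (cMean (updC 1) (fb β) x) ^ 2 ∂(uCube 3) := by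
  set σ := Equiv.swap (0 : Fin 3) 1 with hσ
  have h : ∀ x, (cMean (updC (0 : Fin 3)) (fb β)
      ((MeasurableEquiv.piCongrLeft (fun _ : Fin 3 => ℝ) σ) x)) ^ 2
      = (cMean (updC 1) (fb β) x) ^ 2 := by
    intro x
    congr 1
    unfold cMean updC
    congr 1
    funext t
    simp [fb, phi, Function.update_apply, perm_apply, hσ, Equiv.swap_apply_def]
    ring_nf
    left
    trivial
  calc ∫ x, (cMean (updC (0:Fin 3)) (fb β) x) ^ 2 ∂(uCube 3)
      = ∫ x, (cMean (updC (0:Fin 3)) (fb β)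
          ((MeasurableEquiv.piCongrLeft (fun _ : Fin 3 => ℝ) σ) x)) ^ 2 ∂(uCube 3) :=
        (integral_perm σ _).symm
    _ = _ := by simp only [h]

lemma cm12 (β : ℝ) :
    ∫ x, (cMean (updC 1) (fb β) x) ^ 2 ∂(uCube 3)
      = ∫ x, (cMean (updC 2) (fb β) x) ^ 2 ∂(uCube 3) := by
  set σ := Equiv.swap (1 : Fin 3) 2 with hσ
  have h : ∀ x, (cMean (updC (1 : Fin 3)) (fb β)
      ((MeasurableEquiv.piCongrLeft (fun _ : Fin 3 => ℝ) σ) x)) ^ 2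
      = (cMean (updC 2) (fb β) x) ^ 2 := by
    intro x
    congr 1
    unfold cMean updC
    congr 1
    funext t
    simp [fb, phi, Function.update_apply, perm_apply, hσ, Equiv.swap_apply_def]
    ring_nf
    left
    trivial
  calc ∫ x, (cMean (updC (1:Fin 3)) (fb β) x) ^ 2 ∂(uCube 3)
      = ∫ x, (cMean (updC (1:Fin 3)) (fb β)
          ((MeasurableEquiv.piCongrLeft (fun _ : Fin 3 => ℝ) σ) x)) ^ 2 ∂(uCube 3) :=
        (integral_perm σ _).symm
    _ = _ := by simp only [h]

/-! ### Part C: positivity at `β = 1` -/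

def nu2 : Measure (Fin 2 → ℝ) := Measure.pi fun _ : Fin 2 => nu

instance : IsProbabilityMeasure nu2 := Measure.pi.instIsProbabilityMeasure _
instance : IsProbabilityMeasure (uCube 3) := by
  rw [uCube_eq]; exact Measure.pi.instIsProbabilityMeasure _

lemma nu_compl : nu (Set.Ioo (0:ℝ) 1)ᶜ = 0 := by
  rw [nu, Measure.restrict_apply measurableSet_Ioo.compl]
  simp

lemma ae_cube (n : ℕ) : ∀ᵐ x ∂(Measure.pi fun _ : Fin n => nu), ∀ i, x i ∈ Ioo (0:ℝ) 1 := by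
  rw [ae_all_iff]
  intro i
  rw [ae_iff]
  have hset : {x : Fin n → ℝ | ¬ x i ∈ Ioo (0:ℝ) 1}
      = Set.univ.pi (Function.update (fun _ : Fin n => (Set.univ : Set ℝ)) i (Ioo (0:ℝ) 1)ᶜ) := by
    ext x
    simp only [Set.mem_setOf_eq, Set.mem_pi, Set.mem_univ, forall_true_left]
    constructor
    · intro hx j
      rcases eq_or_ne j i with rfl | hne
      · simpa using hx
      · simp [Function.update_of_ne hne]
    · intro hx
      have := hx i
      simpa using this
  rw [hset, Measure.pi_pi]
  refine Finset.prod_eq_zero (Finset.mem_univ i) ?_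
  simp [nu_compl]

lemma meas_phi : Measurable phi := by unfold phi; fun_prop

lemma int_rpow_nu {r : ℝ} (hr : -1 < r) : Integrable (fun t : ℝ => t ^ r) nu := by
  have h := intervalIntegral.intervalIntegrable_rpow' (a := 0) (b := 1) hr
  rw [intervalIntegrable_iff_integrableOn_Ioo_of_le (by norm_num)] at h
  exact h

def e0 : (Fin 3 → ℝ) ≃ᵐ ℝ × (Fin 2 → ℝ) := MeasurableEquiv.piFinSuccAbove (fun _ : Fin 3 => ℝ) 0
def e1 : (Fin 3 → ℝ) ≃ᵐ ℝ × (Fin 2 → ℝ) := MeasurableEquiv.piFinSuccAbove (fun _ : Fin 3 => ℝ) 1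

lemma mp0 : MeasurePreserving e0 (uCube 3) (nu.prod nu2) :=
  measurePreserving_piFinSuccAbove (fun _ : Fin 3 => nu) 0
lemma mp1 : MeasurePreserving e1 (uCube 3) (nu.prod nu2) :=
  measurePreserving_piFinSuccAbove (fun _ : Fin 3 => nu) 1

lemma intD : Integrable (fun x : Fin 3 → ℝ => (x 0) ^ (-(1/2) : ℝ)) (uCube 3) := by
  have hgm : Measurable (fun p : ℝ × (Fin 2 → ℝ) => p.1 ^ (-(1/2) : ℝ)) := by fun_prop
  have hg : Integrable (fun p : ℝ × (Fin 2 → ℝ) => p.1 ^ (-(1/2) : ℝ)) (nu.prod nu2) := by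
    refine (integrable_prod_iff hgm.aestronglyMeasurable).2 ⟨?_, ?_⟩
    · exact Filter.Eventually.of_forall fun t =>
        (integrable_const (t ^ (-(1/2) : ℝ)) : Integrable (fun _ : Fin 2 → ℝ => t ^ (-(1/2):ℝ)) nu2)
    · simp only [integral_const, measure_univ, probReal_univ, ENNReal.toReal_one, one_smul]
      exact (int_rpow_nu (by norm_num)).norm
  have := ((integrable_map_equiv e0 _).1 (by rw [mp0.map_eq]; exact hg))
  exact this

lemma ae_cube3 : ∀ᵐ x ∂(uCube 3), ∀ i, x i ∈ Ioo (0:ℝ) 1 := by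
  rw [uCube_eq]; exact ae_cube 3

lemma intphi : Integrable phi (uCube 3) := by
  refine intD.mono meas_phi.aestronglyMeasurable ?_
  filter_upwards [ae_cube3] with x hx
  have h0 := hx 0
  have h1 := hx 1
  have h2 := hx 2
  have hs : 0 < x 0 + x 1 + x 2 := by
    have := h0.1; have := h1.1; have := h2.1; linarith
  have hb1 : phi x ≤ (x 0) ^ (-(1/4) : ℝ) :=
    (Real.rpow_le_rpow_iff_of_neg hs h0.1 (by norm_num)).2 (by linarith [h1.1, h2.1])
  have hb2 : (x 0) ^ (-(1/4) : ℝ) ≤ (x 0) ^ (-(1/2) : ℝ) :=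
    Real.rpow_le_rpow_of_exponent_ge h0.1 h0.2.le (by norm_num)
  have hφ : 0 ≤ phi x := Real.rpow_nonneg hs.le _
  rw [Real.norm_eq_abs, Real.norm_eq_abs, abs_of_nonneg hφ,
    abs_of_nonneg (Real.rpow_nonneg h0.1.le _)]
  exact hb1.trans hb2

lemma intphi2 : Integrable (fun x => (phi x) ^ 2) (uCube 3) := by
  refine intD.mono (meas_phi.pow_const 2).aestronglyMeasurable ?_
  filter_upwards [ae_cube3] with x hx
  have h0 := hx 0
  have h1 := hx 1
  have h2 := hx 2
  have hs : 0 < x 0 + x 1 + x 2 := by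
    have := h0.1; have := h1.1; have := h2.1; linarith
  have hb1 : phi x ≤ (x 0) ^ (-(1/4) : ℝ) :=
    (Real.rpow_le_rpow_iff_of_neg hs h0.1 (by norm_num)).2 (by linarith [h1.1, h2.1])
  have hφ : 0 ≤ phi x := Real.rpow_nonneg hs.le _
  have hsq : (phi x) ^ 2 ≤ ((x 0) ^ (-(1/4) : ℝ)) ^ 2 := by
    apply pow_le_pow_left₀ hφ hb1
  have heq : ((x 0) ^ (-(1/4) : ℝ)) ^ 2 = (x 0) ^ (-(1/2) : ℝ) := by
    rw [← Real.rpow_natCast ((x 0) ^ (-(1/4):ℝ)) 2, ← Real.rpow_mul h0.1.le]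
    norm_num
  rw [Real.norm_eq_abs, Real.norm_eq_abs, abs_of_nonneg (pow_nonneg hφ 2),
    abs_of_nonneg (Real.rpow_nonneg h0.1.le _), ← heq]
  exact hsq

section Helpers

variable {α : Type*} [MeasurableSpace α] {μ : Measure α} {f : α → ℝ}

lemma integrable_sub_const_sq [IsFiniteMeasure μ] (hf : Integrable f μ)
    (hf2 : Integrable (fun x => (f x) ^ 2) μ) (m : ℝ) :
    Integrable (fun x => (f x - m) ^ 2) μ := by
  have h : (fun x => (f x - m) ^ 2) = fun x => ((f x) ^ 2 - (2*m) * f x) + m ^ 2 :=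
    funext fun x => by ring
  rw [h]
  exact (hf2.sub (hf.const_mul (2*m))).add (integrable_const _)

lemma expand_sq [IsProbabilityMeasure μ] (hf : Integrable f μ)
    (hf2 : Integrable (fun x => (f x) ^ 2) μ) :
    ∫ x, (f x - ∫ y, f y ∂μ) ^ 2 ∂μ = (∫ x, (f x) ^ 2 ∂μ) - (∫ x, f x ∂μ) ^ 2 := by
  set m := ∫ y, f y ∂μ with hm
  have h1 : (∫ x, (f x - m) ^ 2 ∂μ) = ∫ x, (((f x) ^ 2 - (2*m) * f x) + m ^ 2) ∂μ := by
    congr 1; funext x; ring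
  have h2 : Integrable (fun x => (f x) ^ 2 - 2 * m * f x) μ := hf2.sub (hf.const_mul (2*m))
  have h3 : Integrable (fun x => 2 * m * f x) μ := hf.const_mul (2*m)
  rw [h1, integral_add h2 (integrable_const _),
    integral_sub hf2 h3, integral_const_mul, integral_const]
  simp only [measure_univ, probReal_univ, ENNReal.toReal_one, one_smul, ← hm]
  ring

/-- variance-type lower bound from separated values on two sets -/
lemma key_lb [IsFiniteMeasure μ] {m a b w : ℝ} {A B : Set α}
    (hA : MeasurableSet A) (hB : MeasurableSet B)
    (hwA : w ≤ (μ A).toReal) (hwB : w ≤ (μ B).toReal) (hw : 0 ≤ w)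
    (hfa : ∀ᵐ x ∂μ, x ∈ A → a ≤ f x) (hfb : ∀ᵐ x ∂μ, x ∈ B → f x ≤ b)
    (hba : b ≤ a)
    (hint : Integrable (fun x => (f x - m) ^ 2) μ) :
    w * ((a - b) / 2) ^ 2 ≤ ∫ x, (f x - m) ^ 2 ∂μ := by
  have hnn : 0 ≤ᵐ[μ] fun x => (f x - m) ^ 2 := Filter.Eventually.of_forall fun x => sq_nonneg _
  rcases le_or_gt m ((a + b) / 2) with hm | hm
  · have hstep : ((a - b) / 2) ^ 2 * (μ A).toReal ≤ ∫ x in A, (f x - m) ^ 2 ∂μ := by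
      have hae : ∀ᵐ x ∂μ.restrict A, ((a - b) / 2) ^ 2 ≤ (f x - m) ^ 2 := by
        rw [ae_restrict_iff' hA]
        filter_upwards [hfa] with x hax hxA
        nlinarith [hax hxA]
      have := integral_mono_ae (integrable_const (((a - b) / 2) ^ 2)) hint.restrict hae
      simpa [Measure.restrict_apply_univ, mul_comm, measureReal_def] using this
    calc w * ((a - b) / 2) ^ 2 ≤ ((a - b) / 2) ^ 2 * (μ A).toReal := by
          rw [mul_comm]; gcongr
      _ ≤ ∫ x in A, (f x - m) ^ 2 ∂μ := hstep
      _ ≤ ∫ x, (f x - m) ^ 2 ∂μ := setIntegral_le_integral hint hnn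
  · have hstep : ((a - b) / 2) ^ 2 * (μ B).toReal ≤ ∫ x in B, (f x - m) ^ 2 ∂μ := by
      have hae : ∀ᵐ x ∂μ.restrict B, ((a - b) / 2) ^ 2 ≤ (f x - m) ^ 2 := by
        rw [ae_restrict_iff' hB]
        filter_upwards [hfb] with x hbx hxB
        nlinarith [hbx hxB]
      have := integral_mono_ae (integrable_const (((a - b) / 2) ^ 2)) hint.restrict hae
      simpa [Measure.restrict_apply_univ, mul_comm, measureReal_def] using this
    calc w * ((a - b) / 2) ^ 2 ≤ ((a - b) / 2) ^ 2 * (μ B).toReal := by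
          rw [mul_comm]; gcongr
      _ ≤ ∫ x in B, (f x - m) ^ 2 ∂μ := hstep
      _ ≤ ∫ x, (f x - m) ^ 2 ∂μ := setIntegral_le_integral hint hnn

end Helpers

/-! ### gap estimate -/

def dl : ℝ := (9/4 : ℝ) ^ (-(1/4) : ℝ) * (1 - (11/9 : ℝ) ^ (-(1/4) : ℝ))

lemma dl_pos : 0 < dl := by
  have h1 : 0 < (9/4 : ℝ) ^ (-(1/4) : ℝ) := Real.rpow_pos_of_pos (by norm_num) _
  have h2 : (11/9 : ℝ) ^ (-(1/4) : ℝ) < 1 :=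
    Real.rpow_lt_one_of_one_lt_of_neg (by norm_num) (by norm_num)
  have : 0 < 1 - (11/9:ℝ) ^ (-(1/4):ℝ) := by linarith
  exact mul_pos h1 this

lemma gap {u : ℝ} (h1 : 1/4 ≤ u) (h2 : u ≤ 9/4) :
    dl ≤ u ^ (-(1/4) : ℝ) - (u + 1/2) ^ (-(1/4) : ℝ) := by
  have hu : 0 < u := by linarith
  have hfac : (u + 1/2) ^ (-(1/4) : ℝ) = u ^ (-(1/4):ℝ) * ((u + 1/2)/u) ^ (-(1/4):ℝ) := by
    rw [← Real.mul_rpow hu.le (by positivity)]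
    congr 1
    field_simp
  have hr : (11/9 : ℝ) ≤ (u + 1/2)/u := by
    rw [le_div_iff₀ hu]; nlinarith
  have hratio : ((u + 1/2)/u) ^ (-(1/4):ℝ) ≤ (11/9 : ℝ) ^ (-(1/4):ℝ) :=
    (Real.rpow_le_rpow_iff_of_neg (by positivity) (by norm_num) (by norm_num)).2 hr
  have hbase : (9/4 : ℝ) ^ (-(1/4):ℝ) ≤ u ^ (-(1/4):ℝ) :=
    (Real.rpow_le_rpow_iff_of_neg (by norm_num) hu (by norm_num)).2 h2
  have hone : (11/9 : ℝ) ^ (-(1/4):ℝ) ≤ 1 :=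
    Real.rpow_le_one_of_one_le_of_nonpos (by norm_num) (by norm_num)
  have hpos : (0:ℝ) ≤ u ^ (-(1/4):ℝ) := (Real.rpow_pos_of_pos hu _).le
  have hmul := mul_le_mul_of_nonneg_left hratio hpos
  calc dl ≤ u ^ (-(1/4):ℝ) * (1 - (11/9:ℝ) ^ (-(1/4):ℝ)) := by
        unfold dl
        exact mul_le_mul_of_nonneg_right hbase (by linarith)
    _ ≤ u ^ (-(1/4):ℝ) - (u + 1/2) ^ (-(1/4):ℝ) := by
        rw [hfac, mul_one_sub]
        linarith

/-! ### Fubini setup for the inner variance -/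

def PH : ℝ × (Fin 2 → ℝ) → ℝ := fun p => (p.2 0 + p.1 + p.2 1) ^ (-(1/4) : ℝ)

def HH : (Fin 2 → ℝ) → ℝ := fun y => ∫ t, (y 0 + t + y 1) ^ (-(1/4) : ℝ) ∂nu

lemma sA0 : (1:Fin 3).succAbove 0 = 0 := by decide
lemma sA1 : (1:Fin 3).succAbove 1 = 2 := by decide

lemma e1_fst (x : Fin 3 → ℝ) : (e1 x).1 = x 1 := rfl
lemma e1_snd0 (x : Fin 3 → ℝ) : (e1 x).2 0 = x 0 := by
  show x ((1:Fin 3).succAbove 0) = x 0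
  rw [sA0]
lemma e1_snd1 (x : Fin 3 → ℝ) : (e1 x).2 1 = x 2 := by
  show x ((1:Fin 3).succAbove 1) = x 2
  rw [sA1]

lemma PH_comp (x : Fin 3 → ℝ) : PH (e1 x) = phi x := by
  unfold PH phi
  rw [e1_fst, e1_snd0, e1_snd1]

lemma cMean_phi (x : Fin 3 → ℝ) :
    cMean (updC 1) phi x = ∫ t, (x 0 + t + x 2) ^ (-(1/4) : ℝ) ∂nu := by
  show (∫ t, phi (Function.update x 1 t) ∂nu) = _
  refine integral_congr_ae (Filter.Eventually.of_forall fun t => ?_)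
  unfold phi
  simp [Function.update_apply]

lemma HH_comp (x : Fin 3 → ℝ) : HH ((e1 x).2) = cMean (updC 1) phi x := by
  rw [cMean_phi]
  unfold HH
  rw [e1_snd0, e1_snd1]

lemma meas_PH : Measurable PH := by unfold PH; fun_prop

lemma meas_HH : StronglyMeasurable HH := by
  have : Measurable (fun q : (Fin 2 → ℝ) × ℝ => (q.1 0 + q.2 + q.1 1) ^ (-(1/4) : ℝ)) := by
    fun_prop
  exact this.stronglyMeasurable.integral_prod_right'

lemma intPH2 : Integrable (fun p => (PH p) ^ 2) (nu.prod nu2) := by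
  rw [← mp1.map_eq]
  refine (integrable_map_equiv e1 _).2 ?_
  refine intphi2.congr ?_
  exact Filter.Eventually.of_forall fun x => by simp [Function.comp, PH_comp]

lemma intPH : Integrable PH (nu.prod nu2) := by
  rw [← mp1.map_eq]
  refine (integrable_map_equiv e1 _).2 ?_
  refine intphi.congr ?_
  exact Filter.Eventually.of_forall fun x => by simp [Function.comp, PH_comp]

lemma aeP : ∀ᵐ p ∂(nu.prod nu2),
    p.1 ∈ Ioo (0:ℝ) 1 ∧ p.2 0 ∈ Ioo (0:ℝ) 1 ∧ p.2 1 ∈ Ioo (0:ℝ) 1 := by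
  rw [← mp1.map_eq, e1.measurableEmbedding.ae_map_iff]
  filter_upwards [ae_cube3] with x hx
  rw [e1_fst, e1_snd0, e1_snd1]
  exact ⟨hx 1, hx 0, hx 2⟩

def C0 : ℝ := ∫ t, t ^ (-(1/4) : ℝ) ∂nu

lemma C0_nonneg : 0 ≤ C0 := by
  refine integral_nonneg_of_ae ?_
  filter_upwards [ae_restrict_mem (measurableSet_Ioo : MeasurableSet (Ioo (0:ℝ) 1))] with t ht
  exact Real.rpow_nonneg ht.1.le _

lemma HH_bounds {y : Fin 2 → ℝ} (h0 : y 0 ∈ Ioo (0:ℝ) 1) (h1 : y 1 ∈ Ioo (0:ℝ) 1) :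
    0 ≤ HH y ∧ HH y ≤ C0 := by
  have hmem : ∀ᵐ t ∂nu, t ∈ Ioo (0:ℝ) 1 :=
    ae_restrict_mem measurableSet_Ioo
  constructor
  · refine integral_nonneg_of_ae ?_
    filter_upwards [hmem] with t ht
    exact Real.rpow_nonneg (by nlinarith [h0.1, h1.1, ht.1]) _
  · refine integral_mono_of_nonneg ?_ (int_rpow_nu (by norm_num)) ?_
    · filter_upwards [hmem] with t ht
      exact Real.rpow_nonneg (by nlinarith [h0.1, h1.1, ht.1]) _
    · filter_upwards [hmem] with t ht
      exact (Real.rpow_le_rpow_iff_of_neg (by nlinarith [h0.1, h1.1, ht.1]) ht.1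
        (by norm_num)).2 (by nlinarith [h0.1, h1.1])

lemma intHH2' : Integrable (fun y => (HH y) ^ 2) nu2 := by
  refine Integrable.mono' (integrable_const (C0 ^ 2))
    ((meas_HH.measurable.pow_const 2).aestronglyMeasurable) ?_
  have : ∀ᵐ y ∂nu2, ∀ i, y i ∈ Ioo (0:ℝ) 1 := ae_cube 2
  filter_upwards [this] with y hy
  have hb := HH_bounds (hy 0) (hy 1)
  rw [Real.norm_eq_abs, abs_of_nonneg (pow_nonneg hb.1 2)]
  exact pow_le_pow_left₀ hb.1 hb.2 2

lemma intHH2 : Integrable (fun p : ℝ × (Fin 2 → ℝ) => (HH p.2) ^ 2) (nu.prod nu2) := by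
  refine Integrable.mono' (integrable_const (C0 ^ 2))
    (((meas_HH.measurable.comp measurable_snd).pow_const 2).aestronglyMeasurable) ?_
  filter_upwards [aeP] with p hp
  have hb := HH_bounds hp.2.1 hp.2.2
  rw [Real.norm_eq_abs, abs_of_nonneg (pow_nonneg hb.1 2)]
  exact pow_le_pow_left₀ hb.1 hb.2 2

lemma nu_lo : nu (Ioo (0:ℝ) (1/4)) = ENNReal.ofReal (1/4) := by
  rw [nu, Measure.restrict_apply measurableSet_Ioo,
    inter_eq_self_of_subset_left (Ioo_subset_Ioo le_rfl (by norm_num))]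
  rw [Real.volume_Ioo]
  norm_num

lemma nu_hi : nu (Ioo (3/4:ℝ) 1) = ENNReal.ofReal (1/4) := by
  rw [nu, Measure.restrict_apply measurableSet_Ioo,
    inter_eq_self_of_subset_left (Ioo_subset_Ioo (by norm_num) le_rfl)]
  rw [Real.volume_Ioo]
  norm_num

lemma inner_var_ge {y : Fin 2 → ℝ} (h0 : y 0 ∈ Ioo (0:ℝ) 1) (h1 : y 1 ∈ Ioo (0:ℝ) 1)
    (hI1 : Integrable (fun t => PH (t, y)) nu)
    (hI2 : Integrable (fun t => (PH (t, y)) ^ 2) nu) :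
    dl ^ 2 / 16 ≤ (∫ t, (PH (t, y)) ^ 2 ∂nu) - (HH y) ^ 2 := by
  have hy00 := h0.1
  have hy01 := h0.2
  have hy10 := h1.1
  have hy11 := h1.2
  have hexp := expand_sq hI1 hI2
  have hHy : (∫ t, PH (t, y) ∂nu) = HH y := rfl
  rw [hHy] at hexp
  rw [← hexp]
  have hfa : ∀ᵐ t ∂nu, t ∈ Ioo (0:ℝ) (1/4) →
      (y 0 + y 1 + 1/4 : ℝ) ^ (-(1/4):ℝ) ≤ PH (t, y) := by
    refine Filter.Eventually.of_forall fun t ht => ?_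
    exact (Real.rpow_le_rpow_iff_of_neg (by linarith [ht.1, ht.2])
      (by linarith [ht.1, ht.2]) (by norm_num)).2 (by simp only [PH]; linarith [ht.2])
  have hfb : ∀ᵐ t ∂nu, t ∈ Ioo (3/4:ℝ) 1 →
      PH (t, y) ≤ (y 0 + y 1 + 3/4 : ℝ) ^ (-(1/4):ℝ) := by
    refine Filter.Eventually.of_forall fun t ht => ?_
    exact (Real.rpow_le_rpow_iff_of_neg (by linarith [ht.1, ht.2])
      (by linarith [ht.1, ht.2]) (by norm_num)).2 (by simp only [PH]; linarith [ht.1])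
  have hba : (y 0 + y 1 + 3/4 : ℝ) ^ (-(1/4):ℝ) ≤ (y 0 + y 1 + 1/4 : ℝ) ^ (-(1/4):ℝ) :=
    (Real.rpow_le_rpow_iff_of_neg (by linarith) (by linarith) (by norm_num)).2 (by linarith)
  have hk := key_lb (μ := nu) (f := fun t => PH (t, y)) (m := HH y)
    (a := (y 0 + y 1 + 1/4 : ℝ) ^ (-(1/4):ℝ)) (b := (y 0 + y 1 + 3/4 : ℝ) ^ (-(1/4):ℝ))
    (w := 1/4)
    measurableSet_Ioo measurableSet_Ioo
    (by rw [nu_lo, ENNReal.toReal_ofReal (by norm_num)])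
    (by rw [nu_hi, ENNReal.toReal_ofReal (by norm_num)])
    (by norm_num) hfa hfb hba (integrable_sub_const_sq hI1 hI2 _)
  have hgap : dl ≤ (y 0 + y 1 + 1/4 : ℝ) ^ (-(1/4):ℝ) - (y 0 + y 1 + 3/4 : ℝ) ^ (-(1/4):ℝ) := by
    have h := gap (u := y 0 + y 1 + 1/4) (by linarith) (by linarith)
    rw [show (y 0 + y 1 + 1/4 + 1/2 : ℝ) = y 0 + y 1 + 3/4 by ring] at h
    exact h
  refine le_trans ?_ hk
  nlinarith [dl_pos.le, hgap, hba]

lemma tvar_phi : dl ^ 2 / 16 ≤ tVar (uCube 3) (updC 1) phi := by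
  have hintSq : intSq (uCube 3) phi = ∫ p, (PH p) ^ 2 ∂(nu.prod nu2) := by
    rw [← mp1.map_eq, integral_map_equiv]
    exact integral_congr_ae (Filter.Eventually.of_forall fun x => by
      show phi x ^ 2 = PH (e1 x) ^ 2
      rw [PH_comp])
  have hcm : (∫ x, (cMean (updC 1) phi x) ^ 2 ∂(uCube 3))
      = ∫ p, (HH p.2) ^ 2 ∂(nu.prod nu2) := by
    rw [← mp1.map_eq, integral_map_equiv]
    exact integral_congr_ae (Filter.Eventually.of_forall fun x => by
      show cMean (updC 1) phi x ^ 2 = HH (e1 x).2 ^ 2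
      rw [HH_comp])
  unfold tVar
  rw [hintSq, hcm]
  rw [integral_prod_symm _ intPH2, integral_prod_symm _ intHH2]
  have hsnd : (∫ y, ∫ t, (HH ((t, y) : ℝ × (Fin 2 → ℝ)).2) ^ 2 ∂nu ∂nu2)
      = ∫ y, (HH y) ^ 2 ∂nu2 := by
    refine integral_congr_ae (Filter.Eventually.of_forall fun y => ?_)
    simp
  rw [hsnd]
  have hGint : Integrable (fun y => ∫ t, (PH ((t, y) : ℝ × (Fin 2 → ℝ))) ^ 2 ∂nu) nu2 :=
    intPH2.integral_prod_right
  rw [← integral_sub hGint intHH2']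
  have hconst : dl ^ 2 / 16 = ∫ _, (dl ^ 2 / 16 : ℝ) ∂nu2 := by
    simp
  rw [hconst]
  refine integral_mono_ae (integrable_const _) (hGint.sub intHH2') ?_
  filter_upwards [ae_cube 2, intPH2.prod_left_ae, intPH.prod_left_ae] with y hy h2 h1
  exact inner_var_ge (hy 0) (hy 1) h1 h2

lemma var_phi :
    1/64 * (((3/4:ℝ) ^ (-(1/4):ℝ) - (9/4:ℝ) ^ (-(1/4):ℝ)) / 2) ^ 2 ≤ var' (uCube 3) phi := by
  have hexp := expand_sq intphi intphi2
  unfold var' intSq mval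
  rw [← hexp]
  have hwA : ((uCube 3) (Set.univ.pi fun _ : Fin 3 => Ioo (0:ℝ) (1/4))).toReal = 1/64 := by
    rw [uCube_eq, Measure.pi_pi]
    simp only [show (volume.restrict (Set.Ioo (0:ℝ) 1)) = nu from rfl, nu_lo]
    rw [Finset.prod_const]
    rw [← ENNReal.ofReal_pow (by norm_num)]
    rw [ENNReal.toReal_ofReal (by norm_num)]
    norm_num
  have hwB : ((uCube 3) (Set.univ.pi fun _ : Fin 3 => Ioo (3/4:ℝ) 1)).toReal = 1/64 := by
    rw [uCube_eq, Measure.pi_pi]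
    simp only [show (volume.restrict (Set.Ioo (0:ℝ) 1)) = nu from rfl, nu_hi]
    rw [Finset.prod_const]
    rw [← ENNReal.ofReal_pow (by norm_num)]
    rw [ENNReal.toReal_ofReal (by norm_num)]
    norm_num
  refine key_lb (MeasurableSet.univ_pi fun _ => measurableSet_Ioo)
    (MeasurableSet.univ_pi fun _ => measurableSet_Ioo)
    (le_of_eq hwA.symm) (le_of_eq hwB.symm) (by norm_num) ?_ ?_ ?_
    (integrable_sub_const_sq intphi intphi2 _)
  · refine Filter.Eventually.of_forall fun x hx => ?_
    have h0 := hx 0 (Set.mem_univ 0)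
    have h1 := hx 1 (Set.mem_univ 1)
    have h2 := hx 2 (Set.mem_univ 2)
    exact (Real.rpow_le_rpow_iff_of_neg (by norm_num)
      (by linarith [h0.1, h1.1, h2.1]) (by norm_num)).2
      (by linarith [h0.2, h1.2, h2.2])
  · refine Filter.Eventually.of_forall fun x hx => ?_
    have h0 := hx 0 (Set.mem_univ 0)
    have h1 := hx 1 (Set.mem_univ 1)
    have h2 := hx 2 (Set.mem_univ 2)
    exact (Real.rpow_le_rpow_iff_of_neg
      (by linarith [h0.1, h1.1, h2.1]) (by norm_num) (by norm_num)).2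
      (by linarith [h0.1, h1.1, h2.1])
  · exact (Real.rpow_le_rpow_iff_of_neg (by norm_num) (by norm_num) (by norm_num)).2 (by norm_num)

lemma var_phi_pos : 0 < var' (uCube 3) phi := by
  refine lt_of_lt_of_le ?_ var_phi
  have hstrict : (9/4:ℝ) ^ (-(1/4):ℝ) < (3/4:ℝ) ^ (-(1/4):ℝ) :=
    Real.rpow_lt_rpow_of_neg (by norm_num) (by norm_num) (by norm_num)
  nlinarith [hstrict]

lemma tvar_phi_pos : 0 < tVar (uCube 3) (updC 1) phi := by
  refine lt_of_lt_of_le ?_ tvar_phi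
  have := dl_pos
  positivity

lemma sobolT_phi_pos : 0 < sobolT (uCube 3) (updC 1) phi :=
  div_pos tvar_phi_pos var_phi_pos

end Proof15
end Proof15


/-- Counterexample, multiscale part: for
`g(x₁,x₂,ξ) = β^{-1/4}(x₁+x₂+ξ)^{-1/4}` on `(0,1)³`, the total Sobol index of `x₂`
does not depend on `β`, by symmetry all three indices coincide, and the index of
`x₂` stays bounded away from `0` uniformly in `β > 0`. -/
theorem stmt15 :
    (∀ β β' : ℝ, 0 < β → 0 < β' →
      sobolT (uCube 3) (updC 1)
          (fun x => β ^ (-(1 / 4 : ℝ)) * (x 0 + x 1 + x 2) ^ (-(1 / 4 : ℝ))) =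
        sobolT (uCube 3) (updC 1)
          (fun x => β' ^ (-(1 / 4 : ℝ)) * (x 0 + x 1 + x 2) ^ (-(1 / 4 : ℝ)))) ∧
    (∀ β : ℝ, 0 < β →
      sobolT (uCube 3) (updC 0)
          (fun x => β ^ (-(1 / 4 : ℝ)) * (x 0 + x 1 + x 2) ^ (-(1 / 4 : ℝ))) =
        sobolT (uCube 3) (updC 1)
          (fun x => β ^ (-(1 / 4 : ℝ)) * (x 0 + x 1 + x 2) ^ (-(1 / 4 : ℝ))) ∧
      sobolT (uCube 3) (updC 1)
          (fun x => β ^ (-(1 / 4 : ℝ)) * (x 0 + x 1 + x 2) ^ (-(1 / 4 : ℝ))) =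
        sobolT (uCube 3) (updC 2)
          (fun x => β ^ (-(1 / 4 : ℝ)) * (x 0 + x 1 + x 2) ^ (-(1 / 4 : ℝ)))) ∧
    (∃ c : ℝ, 0 < c ∧ ∀ β : ℝ, 0 < β →
      c ≤ sobolT (uCube 3) (updC 1)
        (fun x => β ^ (-(1 / 4 : ℝ)) * (x 0 + x 1 + x 2) ^ (-(1 / 4 : ℝ)))) := by
  have hscale : ∀ β : ℝ, 0 < β →
      sobolT (uCube 3) (updC 1)
        (fun x => β ^ (-(1 / 4 : ℝ)) * (x 0 + x 1 + x 2) ^ (-(1 / 4 : ℝ)))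
        = sobolT (uCube 3) (updC 1) Proof15.phi := fun β hβ =>
    Proof15.sobolT_const_mul (uCube 3) (updC 1) Proof15.phi
      (ne_of_gt (Real.rpow_pos_of_pos hβ _))
  refine ⟨?_, ?_, ?_⟩
  · intro β β' hβ hβ'
    rw [hscale β hβ, hscale β' hβ']
  · intro β hβ
    constructor
    · show sobolT (uCube 3) (updC 0) (Proof15.fb β) = sobolT (uCube 3) (updC 1) (Proof15.fb β)
      unfold sobolT tVar
      rw [Proof15.cm01 β]
    · show sobolT (uCube 3) (updC 1) (Proof15.fb β) = sobolT (uCube 3) (updC 2) (Proof15.fb β)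
      unfold sobolT tVar
      rw [Proof15.cm12 β]
  · exact ⟨sobolT (uCube 3) (updC 1) Proof15.phi, Proof15.sobolT_phi_pos,
      fun β hβ => le_of_eq (hscale β hβ).symm⟩
end

section
/- For the reaction model z(t,x,ξ) = f(x)·e^{−t·ψ(ξ)} with f ∈ L²((0,1)ⁿ) non-constant, ψ measurable with e^{−tψ} ∈ L²((0,1)ᵐ), and any fixed t ≥ 0, the total Sobol index of each macro-model input x_i satisfies S^z_{T,x_i} ≤ S^f_{T,x_i}, uniformly in t. -/
open MeasureTheory

namespace SobolAux

open Set Function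

instance : IsProbabilityMeasure ((volume : Measure ℝ).restrict (Set.Ioo 0 1)) := by
  constructor
  simp [Real.volume_Ioo]

instance (n : ℕ) : IsProbabilityMeasure (uCube n) := by
  unfold uCube; infer_instance

lemma sq_int_le {α : Type*} [MeasurableSpace α] (μ : Measure α) [IsProbabilityMeasure μ]
    {g : α → ℝ} (hg : MemLp g 2 μ) : (∫ x, g x ∂μ) ^ 2 ≤ ∫ x, g x ^ 2 ∂μ := by
  have h0 := ProbabilityTheory.variance_nonneg g μ
  rw [ProbabilityTheory.variance_eq_sub hg] at h0
  have he : (∫ x, (g ^ 2) x ∂μ) = ∫ x, g x ^ 2 ∂μ := rfl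
  rw [he] at h0
  linarith

lemma updMP {n : ℕ} (i : Fin n) :
    MeasurePreserving (fun p : (Fin n → ℝ) × ℝ => Function.update p.1 i p.2)
      ((uCube n).prod ((volume : Measure ℝ).restrict (Set.Ioo 0 1))) (uCube n) := by
  set ν : Measure ℝ := (volume : Measure ℝ).restrict (Set.Ioo 0 1)
  refine ⟨measurable_update', ?_⟩
  refine (Measure.pi_eq fun s hs => ?_).symm
  rw [Measure.map_apply measurable_update' (MeasurableSet.univ_pi hs)]
  have hpre : (fun p : (Fin n → ℝ) × ℝ => Function.update p.1 i p.2) ⁻¹' (univ.pi s)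
      = (Set.pi {i}ᶜ s) ×ˢ (s i) := by
    ext p
    simp only [mem_preimage, mem_pi, mem_univ, forall_true_left, mem_prod, mem_compl_iff,
      mem_singleton_iff]
    constructor
    · intro h
      refine ⟨fun j hj => ?_, ?_⟩
      · have := h j; rwa [Function.update_of_ne hj] at this
      · have := h i; rwa [Function.update_self] at this
    · rintro ⟨h1, h2⟩ j
      rcases eq_or_ne j i with rfl | hj
      · simpa using h2
      · rw [Function.update_of_ne hj]; exact h1 j hj
  rw [hpre, Measure.prod_prod]
  have hset : (({i}ᶜ : Set (Fin n)).pi s) = Set.pi univ (fun j => if j = i then univ else s j) := by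
    ext x
    simp only [mem_pi, mem_univ, forall_true_left, mem_compl_iff, mem_singleton_iff]
    constructor
    · intro h j
      by_cases hj : j = i
      · simp [hj]
      · simp only [hj, if_false]; exact h j hj
    · intro h j hj
      have := h j; simpa [hj] using this
  rw [hset]
  show (Measure.pi fun _ => ν) _ * _ = _
  rw [Measure.pi_pi]
  simp_rw [apply_ite ν, measure_univ]
  rw [← Finset.mul_prod_erase Finset.univ _ (Finset.mem_univ i),
    ← Finset.mul_prod_erase Finset.univ (fun j => ν (s j)) (Finset.mem_univ i)]
  rw [if_pos rfl, one_mul]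
  rw [Finset.prod_congr rfl (fun j hj => if_neg (Finset.ne_of_mem_erase hj))]
  ring

lemma cMean_sq_le {n : ℕ} (i : Fin n) {f : (Fin n → ℝ) → ℝ} (hf : MemLp f 2 (uCube n)) :
    (∫ x, (∫ t in Set.Ioo (0:ℝ) 1, f (Function.update x i t)) ^ 2 ∂(uCube n))
      ≤ ∫ x, f x ^ 2 ∂(uCube n) := by
  set μ := uCube n
  set ν : Measure ℝ := (volume : Measure ℝ).restrict (Set.Ioo 0 1)
  set T : (Fin n → ℝ) × ℝ → (Fin n → ℝ) := fun p => Function.update p.1 i p.2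
  set P := μ.prod ν
  have hT : MeasurePreserving T P μ := updMP i
  have hfm : AEStronglyMeasurable f μ := hf.1
  have hF : AEStronglyMeasurable (fun p => f (T p)) P :=
    hfm.comp_quasiMeasurePreserving hT.quasiMeasurePreserving
  have hsq : Integrable (fun x => f x ^ 2) μ :=
    (memLp_two_iff_integrable_sq hfm).1 hf
  have hF2 : Integrable (fun p => f (T p) ^ 2) P := by
    have := (integrable_map_measure (by rw [hT.map_eq]; exact hsq.aestronglyMeasurable)
      hT.aemeasurable).1 (by rw [hT.map_eq]; exact hsq)
    exact this
  -- a.e. slice facts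
  have haeInt : ∀ᵐ x ∂μ, Integrable (fun t => f (T (x, t)) ^ 2) ν :=
    hF2.prod_right_ae
  have haeM : ∀ᵐ x ∂μ, AEStronglyMeasurable (fun t => f (T (x, t))) ν :=
    hF.prodMk_left
  have haeKey : ∀ᵐ x ∂μ,
      (∫ t, f (T (x, t)) ∂ν) ^ 2 ≤ ∫ t, f (T (x, t)) ^ 2 ∂ν := by
    filter_upwards [haeInt, haeM] with x h1 h2
    exact sq_int_le ν ((memLp_two_iff_integrable_sq h2).2 h1)
  have hg : AEStronglyMeasurable (fun x => ∫ t, f (T (x, t)) ∂ν) μ :=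
    hF.integral_prod_right'
  have hRI : Integrable (fun x => ∫ t, f (T (x, t)) ^ 2 ∂ν) μ :=
    hF2.integral_prod_left
  have hg2 : Integrable (fun x => (∫ t, f (T (x, t)) ∂ν) ^ 2) μ := by
    refine Integrable.mono' hRI (hg.pow 2) ?_
    filter_upwards [haeKey, haeInt] with x h1 h2
    rw [Real.norm_eq_abs, abs_of_nonneg (sq_nonneg _)]
    exact h1
  have step1 : (∫ x, (∫ t, f (T (x, t)) ∂ν) ^ 2 ∂μ)
      ≤ ∫ x, (∫ t, f (T (x, t)) ^ 2 ∂ν) ∂μ :=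
    integral_mono_ae hg2 hRI haeKey
  have step2 : (∫ x, (∫ t, f (T (x, t)) ^ 2 ∂ν) ∂μ) = ∫ p, f (T p) ^ 2 ∂P :=
    integral_integral hF2
  have step3 : (∫ p, f (T p) ^ 2 ∂P) = ∫ x, f x ^ 2 ∂μ := by
    have hA : AEStronglyMeasurable (fun x => f x ^ 2) (Measure.map T P) := by
      rw [hT.map_eq]; exact hsq.aestronglyMeasurable
    have h2 := integral_map hT.aemeasurable hA
    rw [hT.map_eq] at h2
    exact h2.symm
  have hId : ∀ x, (∫ t in Set.Ioo (0:ℝ) 1, f (Function.update x i t))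
      = ∫ t, f (T (x, t)) ∂ν := fun x => rfl
  calc (∫ x, (∫ t in Set.Ioo (0:ℝ) 1, f (Function.update x i t)) ^ 2 ∂μ)
      = ∫ x, (∫ t, f (T (x, t)) ∂ν) ^ 2 ∂μ := rfl
    _ ≤ ∫ x, (∫ t, f (T (x, t)) ^ 2 ∂ν) ∂μ := step1
    _ = ∫ p, f (T p) ^ 2 ∂P := step2
    _ = ∫ x, f x ^ 2 ∂μ := step3

end SobolAux


/-- Reaction model: for `z(t,x,ξ) = f(x)·exp(−t·ψ(ξ))` with non-constant `f` and
any fixed `t ≥ 0`, the total Sobol index of each macro input `x_i` satisfies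
`S^z_{T,x_i} ≤ S^f_{T,x_i}`. -/
theorem stmt17 {n m : ℕ} (i : Fin n) (f : (Fin n → ℝ) → ℝ) (ψ : (Fin m → ℝ) → ℝ)
    (hf : MemLp f 2 (uCube n)) (hψ : Measurable ψ)
    (hvf : 0 < var' (uCube n) f) :
    ∀ t : ℝ, 0 ≤ t →
      MemLp (fun ξ => Real.exp (-t * ψ ξ)) 2 (uCube m) →
      0 < var' ((uCube n).prod (uCube m))
        (fun p => f p.1 * Real.exp (-t * ψ p.2)) →
      sobolT ((uCube n).prod (uCube m)) (updF i)
          (fun p => f p.1 * Real.exp (-t * ψ p.2)) ≤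
        sobolT (uCube n) (updC i) f := by
  intro t ht hψℒ hvz
  classical
  have e1 : intSq ((uCube n).prod (uCube m)) (fun p => f p.1 * Real.exp (-t * ψ p.2))
      = intSq (uCube n) f * intSq (uCube m) (fun ξ => Real.exp (-t * ψ ξ)) := by
    unfold intSq
    simp_rw [mul_pow]
    exact integral_prod_mul (f := fun x => f x ^ 2) (g := fun ξ => Real.exp (-t * ψ ξ) ^ 2)
  have e2 : mval ((uCube n).prod (uCube m)) (fun p => f p.1 * Real.exp (-t * ψ p.2))
      = mval (uCube n) f * mval (uCube m) (fun ξ => Real.exp (-t * ψ ξ)) := by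
    unfold mval
    exact integral_prod_mul (f := f) (g := fun ξ => Real.exp (-t * ψ ξ))
  have e3 : ∀ p : (Fin n → ℝ) × (Fin m → ℝ),
      cMean (updF i) (fun p => f p.1 * Real.exp (-t * ψ p.2)) p
        = cMean (updC i) f p.1 * Real.exp (-t * ψ p.2) := by
    intro p
    unfold cMean updF updC
    exact integral_mul_const (Real.exp (-t * ψ p.2)) (fun s => f (Function.update p.1 i s))
  have e4 : (∫ p, (cMean (updF i) (fun p => f p.1 * Real.exp (-t * ψ p.2)) p) ^ 2
        ∂((uCube n).prod (uCube m)))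
      = (∫ x, (cMean (updC i) f x) ^ 2 ∂(uCube n))
          * intSq (uCube m) (fun ξ => Real.exp (-t * ψ ξ)) := by
    simp_rw [e3, mul_pow]
    exact integral_prod_mul (f := fun x => (cMean (updC i) f x) ^ 2)
      (g := fun ξ => Real.exp (-t * ψ ξ) ^ 2)
  have hb : (mval (uCube m) (fun ξ => Real.exp (-t * ψ ξ))) ^ 2
      ≤ intSq (uCube m) (fun ξ => Real.exp (-t * ψ ξ)) :=
    SobolAux.sq_int_le (uCube m) hψℒ
  have hAC : (∫ x, (cMean (updC i) f x) ^ 2 ∂(uCube n)) ≤ intSq (uCube n) f :=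
    SobolAux.cMean_sq_le i hf
  unfold var' at hvf hvz
  rw [e1, e2] at hvz
  unfold sobolT tVar var'
  rw [e1, e2, e4]
  set A := intSq (uCube n) f
  set a := mval (uCube n) f
  set B := intSq (uCube m) (fun ξ => Real.exp (-t * ψ ξ))
  set b := mval (uCube m) (fun ξ => Real.exp (-t * ψ ξ))
  set C := ∫ x, (cMean (updC i) f x) ^ 2 ∂(uCube n)
  rw [div_le_div_iff₀ hvz hvf]
  nlinarith [mul_nonneg (mul_nonneg (sub_nonneg.2 hAC) (sq_nonneg a)) (sub_nonneg.2 hb)]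
end
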